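/- Let C_n denote the Catalan numbers and define the sequence (A_n) by A_0 = 1 and A_{n+1} = \sum_{i+j+k=n} C_i C_j C_k. Then for every real x with 0 < x \le 1/4 the series \sum_{n=0}^{\infty} A_n x^n converges and equals (1 - \sqrt{1-4x})^3 / (8 x^2) + 1. -/

import Mathlib

lemma cb_sq_bound (n : ℕ) : ((Nat.centralBinom n : ℝ))^2 * (3*n+1) ≤ 16^n := by
  induction n with
  | zero => simp [Nat.centralBinom]
  | succ n ih =>
    have h : ((n:ℝ)+1) * Nat.centralBinom (n+1) = 2*(2*n+1) * Nat.centralBinom n := by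
      exact_mod_cast Nat.succ_mul_centralBinom_succ n
    have hn : (0:ℝ) ≤ (n:ℝ) := n.cast_nonneg
    have hc : (0:ℝ) ≤ (Nat.centralBinom n : ℝ) := (Nat.centralBinom n).cast_nonneg
    have hp : (0:ℝ) < ((n:ℝ)+1)^2 := by positivity
    rw [← mul_le_mul_iff_right₀ hp]
    have key : (((n:ℝ)+1) * Nat.centralBinom (n+1))^2 * (3*(n+1)+1)
        ≤ 16 * ((n:ℝ)+1)^2 * ((Nat.centralBinom n : ℝ)^2 * (3*n+1)) := by
      rw [h]
      nlinarith [sq_nonneg ((Nat.centralBinom n : ℝ)), sq_nonneg ((Nat.centralBinom n : ℝ) * (n:ℝ))]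
    push_cast
    calc ((n:ℝ)+1)^2 * ((Nat.centralBinom (n+1):ℝ)^2 * (3*(n+1)+1))
        = (((n:ℝ)+1) * Nat.centralBinom (n+1))^2 * (3*(n+1)+1) := by ring
      _ ≤ 16 * ((n:ℝ)+1)^2 * ((Nat.centralBinom n : ℝ)^2 * (3*n+1)) := key
      _ ≤ 16 * ((n:ℝ)+1)^2 * 16^n := by
          apply mul_le_mul_of_nonneg_left ih (by positivity)
      _ = ((n:ℝ)+1)^2 * 16^(n+1) := by ring

lemma cat_term_bound {x : ℝ} (hx0 : 0 ≤ x) (hx : x ≤ 1/4) (n : ℕ) :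
    (catalan n : ℝ) * x ^ n ≤ 1 / (((n:ℝ)+1) * Real.sqrt ((n:ℝ)+1)) := by
  have hcat : ((n:ℝ)+1) * (catalan n : ℝ) = (Nat.centralBinom n : ℝ) := by
    exact_mod_cast succ_mul_catalan_eq_centralBinom n
  have h1 : (Nat.centralBinom n : ℝ) * Real.sqrt (3*n+1) ≤ 4^n := by
    have : (Nat.centralBinom n : ℝ) * Real.sqrt (3*n+1)
        = Real.sqrt ((Nat.centralBinom n : ℝ)^2 * (3*n+1)) := by
      rw [Real.sqrt_mul (by positivity), Real.sqrt_sq (by positivity)]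
    rw [this]
    calc Real.sqrt ((Nat.centralBinom n : ℝ)^2 * (3*n+1)) ≤ Real.sqrt (16^n) :=
          Real.sqrt_le_sqrt (cb_sq_bound n)
      _ = 4^n := by
          rw [show (16:ℝ)^n = ((4:ℝ)^n)^2 by rw [← pow_mul, mul_comm, pow_mul]; norm_num,
            Real.sqrt_sq (by positivity)]
  have hsle : Real.sqrt ((n:ℝ)+1) ≤ Real.sqrt (3*n+1) := by
    apply Real.sqrt_le_sqrt; have : (0:ℝ) ≤ (n:ℝ) := n.cast_nonneg; linarith
  have hxp : x ^ n ≤ (1/4:ℝ)^n := pow_le_pow_left₀ hx0 hx n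
  have hkey : ((catalan n : ℝ) * x ^ n) * (((n:ℝ)+1) * Real.sqrt ((n:ℝ)+1)) ≤ 1 := by
    calc ((catalan n : ℝ) * x ^ n) * (((n:ℝ)+1) * Real.sqrt ((n:ℝ)+1))
        = (((n:ℝ)+1) * (catalan n : ℝ)) * Real.sqrt ((n:ℝ)+1) * x ^ n := by ring
      _ ≤ (((n:ℝ)+1) * (catalan n : ℝ)) * Real.sqrt (3*n+1) * (1/4:ℝ)^n := by
          apply mul_le_mul _ hxp (by positivity) (by positivity)
          exact mul_le_mul_of_nonneg_left hsle (by positivity)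
      _ = ((Nat.centralBinom n : ℝ) * Real.sqrt (3*n+1)) * (1/4:ℝ)^n := by rw [hcat]
      _ ≤ 4^n * (1/4:ℝ)^n := mul_le_mul_of_nonneg_right h1 (by positivity)
      _ = 1 := by rw [← mul_pow]; norm_num
  have hpos : 0 < ((n:ℝ)+1) * Real.sqrt ((n:ℝ)+1) := by positivity
  rw [le_div_iff₀ hpos]
  exact hkey

lemma summable_cat {x : ℝ} (hx0 : 0 ≤ x) (hx : x ≤ 1/4) :
    Summable (fun n : ℕ => (catalan n : ℝ) * x ^ n) := by
  have hmaj : Summable (fun n : ℕ => 1 / (((n:ℝ)+1) * Real.sqrt ((n:ℝ)+1))) := by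
    have h1 : Summable (fun n : ℕ => 1 / (n:ℝ) ^ ((3:ℝ)/2)) :=
      Real.summable_one_div_nat_rpow.mpr (by norm_num)
    have h2 := (summable_nat_add_iff 1).mpr h1
    apply h2.congr
    intro n
    have hn1 : (0:ℝ) ≤ (n:ℝ)+1 := by positivity
    have : ((n:ℝ)+1) ^ ((3:ℝ)/2) = ((n:ℝ)+1) * Real.sqrt ((n:ℝ)+1) := by
      rw [show (3:ℝ)/2 = 1 + 1/2 by norm_num, Real.rpow_add (by positivity), Real.rpow_one,
        Real.sqrt_eq_rpow]
    push_cast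
    rw [this]
  apply Summable.of_nonneg_of_le _ (cat_term_bound hx0 hx) hmaj
  intro n; positivity

lemma catalan_succ_range (n : ℕ) :
    catalan (n+1) = ∑ i ∈ Finset.range (n+1), catalan i * catalan (n - i) := by
  rw [catalan_succ, Finset.sum_range]

lemma summable_norm_cat {x : ℝ} (hx0 : 0 ≤ x) (hx : x ≤ 1/4) :
    Summable (fun n : ℕ => ‖(catalan n : ℝ) * x ^ n‖) := by
  apply (summable_cat hx0 hx).congr
  intro n
  rw [Real.norm_eq_abs, abs_of_nonneg (by positivity)]

lemma cat_funEq {x : ℝ} (hx0 : 0 ≤ x) (hx : x ≤ 1/4) :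
    (∑' n : ℕ, (catalan n : ℝ) * x ^ n)
      = x * (∑' n : ℕ, (catalan n : ℝ) * x ^ n)^2 + 1 := by
  set S := ∑' n : ℕ, (catalan n : ℝ) * x ^ n with hS
  have hsum := summable_cat hx0 hx
  have hnorm := summable_norm_cat hx0 hx
  have H := hasSum_sum_range_mul_of_summable_norm hnorm hnorm
  have Heq : ∀ n : ℕ, (∑ k ∈ Finset.range (n+1),
      ((catalan k : ℝ) * x ^ k) * ((catalan (n-k) : ℝ) * x ^ (n-k)))
      = (catalan (n+1) : ℝ) * x ^ n := by
    intro n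
    rw [catalan_succ_range]
    push_cast
    rw [Finset.sum_mul]
    apply Finset.sum_congr rfl
    intro k hk
    have hk' : k ≤ n := Nat.lt_succ_iff.mp (Finset.mem_range.mp hk)
    rw [show (catalan k : ℝ) * x ^ k * ((catalan (n-k) : ℝ) * x ^ (n-k))
      = (catalan k : ℝ) * (catalan (n-k) : ℝ) * (x ^ k * x ^ (n-k)) by ring,
      ← pow_add, Nat.add_sub_cancel' hk']
  rw [funext Heq] at H
  have H2 : HasSum (fun n : ℕ => (catalan (n+1) : ℝ) * x ^ (n+1)) (x * (S * S)) := by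
    have := H.mul_left x
    apply this.congr_fun
    intro n; ring
  have H3 := (hasSum_nat_add_iff (f := fun n : ℕ => (catalan n : ℝ) * x ^ n) 1).mp H2
  simp only [Finset.range_one, Finset.sum_singleton, catalan_zero, Nat.cast_one, pow_zero,
    one_mul, mul_one] at H3
  have := H3.tsum_eq
  rw [← hS] at this
  rw [sq]; exact this

lemma cat_S_le_two {x : ℝ} (hx0 : 0 ≤ x) (hx : x ≤ 1/4) :
    (∑' n : ℕ, (catalan n : ℝ) * x ^ n) ≤ 2 := by
  have h14 : (∑' n : ℕ, (catalan n : ℝ) * (1/4:ℝ) ^ n) = 2 := by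
    have := cat_funEq (x := (1/4:ℝ)) (by norm_num) le_rfl
    set T := ∑' n : ℕ, (catalan n : ℝ) * (1/4:ℝ) ^ n
    nlinarith [sq_nonneg (T - 2)]
  calc (∑' n : ℕ, (catalan n : ℝ) * x ^ n)
      ≤ (∑' n : ℕ, (catalan n : ℝ) * (1/4:ℝ) ^ n) := by
        apply Summable.tsum_le_tsum _ (summable_cat hx0 hx) (summable_cat (by norm_num) le_rfl)
        intro n
        exact mul_le_mul_of_nonneg_left (pow_le_pow_left₀ hx0 hx n) (catalan n).cast_nonneg
    _ = 2 := h14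

lemma cat_S_val {x : ℝ} (hx0 : 0 < x) (hx : x ≤ 1/4) :
    (∑' n : ℕ, (catalan n : ℝ) * x ^ n) = (1 - Real.sqrt (1 - 4*x)) / (2*x) := by
  set S := ∑' n : ℕ, (catalan n : ℝ) * x ^ n with hS
  have hfe := cat_funEq hx0.le hx
  rw [← hS] at hfe
  have hSle := cat_S_le_two hx0.le hx
  rw [← hS] at hSle
  have hSnn : 0 ≤ S := tsum_nonneg (fun n => by positivity)
  set s := Real.sqrt (1 - 4*x) with hs
  have hs2 : s^2 = 1 - 4*x := Real.sq_sqrt (by linarith)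
  have hsnn : 0 ≤ s := Real.sqrt_nonneg _
  have hfac : (2*x*S - 1 + s) * (2*x*S - 1 - s) = 0 := by nlinarith [hfe, hs2]
  have hle : 2*x*S - 1 ≤ 0 := by nlinarith
  have h2xS : 2*x*S = 1 - s := by
    rcases mul_eq_zero.mp hfac with h | h
    · linarith
    · have hs0 : s = 0 := le_antisymm (by linarith) hsnn
      linarith
  field_simp
  linarith

theorem stmt0 (A : ℕ → ℕ) (hA0 : A 0 = 1)
    (hA : ∀ n : ℕ, A (n + 1) =
      ∑ i ∈ Finset.range (n + 1), ∑ j ∈ Finset.range (n + 1 - i),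
        catalan i * catalan j * catalan (n - i - j))
    (x : ℝ) (hx0 : 0 < x) (hx : x ≤ 1 / 4) :
    HasSum (fun n : ℕ => (A n : ℝ) * x ^ n)
      ((1 - Real.sqrt (1 - 4 * x)) ^ 3 / (8 * x ^ 2) + 1) := by
  set f : ℕ → ℝ := fun n => (catalan n : ℝ) * x ^ n with hf
  have hsum : Summable f := summable_cat hx0.le hx
  have hnorm : Summable (fun n => ‖f n‖) := summable_norm_cat hx0.le hx
  set S := ∑' n : ℕ, f n with hS
  set g2 : ℕ → ℝ := fun n => ∑ k ∈ Finset.range (n+1), f k * f (n-k) with hg2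
  have H2 : HasSum g2 (S * S) := hasSum_sum_range_mul_of_summable_norm hnorm hnorm
  have hg2nn : ∀ n, 0 ≤ g2 n := by
    intro n
    apply Finset.sum_nonneg
    intro k _
    have : 0 ≤ f k := by rw [hf]; positivity
    have : 0 ≤ f (n-k) := by rw [hf]; positivity
    positivity
  have hnormg2 : Summable (fun n => ‖g2 n‖) := by
    apply H2.summable.congr
    intro n
    rw [Real.norm_eq_abs, abs_of_nonneg (hg2nn n)]
  have H3 : HasSum (fun n : ℕ => ∑ i ∈ Finset.range (n+1), f i * g2 (n-i))
      (S * (S * S)) := by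
    have := hasSum_sum_range_mul_of_summable_norm hnorm hnormg2
    rwa [H2.tsum_eq, ← hS] at this
  have Heq : ∀ n : ℕ, x * (∑ i ∈ Finset.range (n+1), f i * g2 (n-i))
      = (A (n+1) : ℝ) * x ^ (n+1) := by
    intro n
    rw [hA n]
    push_cast
    rw [Finset.sum_mul, Finset.mul_sum]
    apply Finset.sum_congr rfl
    intro i hi
    have hi' : i ≤ n := Nat.lt_succ_iff.mp (Finset.mem_range.mp hi)
    have hrange : n + 1 - i = (n - i) + 1 := by omega
    rw [hrange, hg2]
    simp only
    rw [Finset.sum_mul, Finset.mul_sum, Finset.mul_sum]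
    apply Finset.sum_congr rfl
    intro j hj
    have hj' : j ≤ n - i := Nat.lt_succ_iff.mp (Finset.mem_range.mp hj)
    have hxp : x * (x ^ i * (x ^ j * x ^ ((n-i)-j))) = x ^ (n+1) := by
      rw [← pow_add, ← pow_add]
      rw [show j + ((n-i)-j) = n - i by omega, show i + (n-i) = n by omega, ← pow_succ']
    calc x * (f i * (f j * f ((n-i)-j)))
        = (catalan i : ℝ) * (catalan j : ℝ) * (catalan ((n-i)-j) : ℝ)
          * (x * (x ^ i * (x ^ j * x ^ ((n-i)-j)))) := by rw [hf]; ring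
      _ = (catalan i : ℝ) * (catalan j : ℝ) * (catalan (n-i-j) : ℝ) * x ^ (n+1) := by
          rw [hxp]
  have H4 : HasSum (fun n : ℕ => (A (n+1) : ℝ) * x ^ (n+1)) (x * (S * (S * S))) := by
    have := H3.mul_left x
    exact this.congr_fun (fun n => (Heq n).symm)
  have H5 := (hasSum_nat_add_iff (f := fun n : ℕ => (A n : ℝ) * x ^ n) 1).mp H4
  simp only [Finset.range_one, Finset.sum_singleton, hA0, Nat.cast_one, pow_zero, one_mul,
    mul_one] at H5
  have hSval : S = (1 - Real.sqrt (1 - 4*x)) / (2*x) := cat_S_val hx0 hx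
  have hval : x * (S * (S * S)) + 1 = (1 - Real.sqrt (1 - 4 * x)) ^ 3 / (8 * x ^ 2) + 1 := by
    rw [hSval]
    have hxne : x ≠ 0 := hx0.ne'
    field_simp
    ring
  rwa [hval] at H5
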